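/- arXiv:1004.3802 — 2 statements merged into one kernel-verified Lean document; each statement's English description precedes it below -/
import Mathlib

section
/- Union holds for well-founded extensional apgs: for any well-founded extensional apg X (on a type in a fixed universe) there exists a well-founded extensional apg U (on a type in the same universe) such that for every well-founded extensional apg W, W ⋿ U if and only if there exists a member y of X with W ⋿ X/y. -/
universe u v

/-- A relation is (inductively) well-founded if every inductive subset is the whole type:
`S` is inductive when `x ∈ S` whenever every child of `x` is in `S`. -/
def IsWFRel {X : Type u} (r : X → X → Prop) : Prop :=
  ∀ S : Set X, (∀ x, (∀ y, r y x → y ∈ S) → x ∈ S) → S = Set.univ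

/-- A relation is extensional if nodes with the same children are equal. -/
def IsExtRel {X : Type u} (r : X → X → Prop) : Prop :=
  ∀ x y, (∀ z, r z x ↔ r z y) → x = y

/-- `Below r x` is the full subgraph `X/x` of nodes admitting a (possibly empty) path to `x`. -/
def Below {X : Type u} (r : X → X → Prop) (x : X) : Type u :=
  {z : X // Relation.ReflTransGen r z x}

/-- The induced relation on the subgraph `X/x`. -/
def belowRel {X : Type u} (r : X → X → Prop) (x : X) :
    Below r x → Below r x → Prop :=
  fun a b => r a.1 b.1

/-- The root of the pointed subgraph `X/x`. -/
def belowRoot {X : Type u} (r : X → X → Prop) (x : X) : Below r x :=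
  ⟨x, Relation.ReflTransGen.refl⟩

/-- Isomorphism of pointed graphs: a relation-preserving-and-reflecting bijection
taking the first distinguished point to the second. -/
def PIso {X : Type u} {Y : Type v} (rX : X → X → Prop) (rY : Y → Y → Prop)
    (x : X) (y : Y) : Prop :=
  ∃ f : X ≃ Y, (∀ a b, rX a b ↔ rY (f a) (f b)) ∧ f x = y

/-- A simulation of graphs. -/
def IsSimulation {X : Type u} {Y : Type v} (rX : X → X → Prop)
    (rY : Y → Y → Prop) (f : X → Y) : Prop :=
  (∀ a b, rX a b → rY (f a) (f b)) ∧
  (∀ x y, rY y (f x) → ∃ a, rX a x ∧ f a = y)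

/-- A bisimulation between graphs. -/
def IsBisimulation {X : Type u} {Y : Type v} (rX : X → X → Prop)
    (rY : Y → Y → Prop) (R : X → Y → Prop) : Prop :=
  ∀ x y, R x y →
    (∀ x', rX x' x → ∃ y', rY y' y ∧ R x' y') ∧
    (∀ y', rY y' y → ∃ x', rX x' x ∧ R x' y')

/-- A bi-entire relation. -/
def BiEntire {X : Type u} {Y : Type v} (R : X → Y → Prop) : Prop :=
  (∀ x, ∃ y, R x y) ∧ (∀ y, ∃ x, R x y)

/-- A well-founded extensional accessible pointed graph ("apg") on a type in universe `u`. -/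
structure WEApg : Type (u + 1) where
  carrier : Type u
  rel : carrier → carrier → Prop
  root : carrier
  acc : ∀ x, Relation.ReflTransGen rel x root
  wf : IsWFRel rel
  ext : IsExtRel rel

/-- Isomorphism of (the underlying pointed graphs of) apgs. -/
def WEApg.Iso (X Y : WEApg.{u}) : Prop :=
  PIso X.rel Y.rel X.root Y.root

/-- Membership of the pointed graph `(W, rW, w)` in the pointed graph `(Y, rY, y)`:
`(W, rW, w)` is isomorphic as a pointed graph to `(Y, rY)/z` for some child `z` of `y`. -/
def MemPGAt {W : Type u} {Y : Type v} (rW : W → W → Prop) (w : W)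
    (rY : Y → Y → Prop) (y : Y) : Prop :=
  ∃ z, rY z y ∧ PIso rW (belowRel rY z) w (belowRoot rY z)

/-- `X ⋿ Y` for apgs: `X` is isomorphic as a pointed graph to `Y/y` for some member
(child of the root) `y` of `Y`. -/
def WEApg.Mem (X Y : WEApg.{u}) : Prop :=
  MemPGAt X.rel X.root Y.rel Y.root

section AuxLemmas

variable {A : Type*} {B : Type*} {C : Type*}

theorem piso_symm {rA : A → A → Prop} {rB : B → B → Prop} {a : A} {b : B}
    (h : PIso rA rB a b) : PIso rB rA b a := by
  obtain ⟨f, hf, hx⟩ := h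
  refine ⟨f.symm, fun u v => ?_, by simp [← hx]⟩
  rw [hf (f.symm u) (f.symm v)]
  simp

theorem piso_trans {rA : A → A → Prop} {rB : B → B → Prop} {rC : C → C → Prop}
    {a : A} {b : B} {c : C}
    (h1 : PIso rA rB a b) (h2 : PIso rB rC b c) : PIso rA rC a c := by
  obtain ⟨f, hf, hx⟩ := h1; obtain ⟨g, hg, hy⟩ := h2
  exact ⟨f.trans g, fun u v => (hf u v).trans (hg _ _), by simp [hx, hy]⟩

theorem wellFounded_of_isWFRel {r : A → A → Prop} (h : IsWFRel r) : WellFounded r := by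
  constructor
  intro a
  have h2 := h {x | Acc r x} (fun x hx => Acc.intro x hx)
  exact Set.eq_univ_iff_forall.mp h2 a

theorem isWFRel_of_wellFounded {r : A → A → Prop} (h : WellFounded r) : IsWFRel r := by
  intro S hS
  apply Set.eq_univ_of_forall
  intro x
  induction x using h.induction with
  | _ x ih => exact hS x ih

theorem reflTransGen_descend {rA : A → A → Prop} {rB : B → B → Prop} {g : A → B}
    (hg : ∀ u v, rA u v ↔ rB (g u) (g v))
    (hdc : ∀ (u : A) (y : B), rB y (g u) → ∃ v, g v = y)
    {y : B} {b : A} (p : Relation.ReflTransGen rB y (g b)) :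
    ∃ a, g a = y ∧ Relation.ReflTransGen rA a b := by
  induction p using Relation.ReflTransGen.head_induction_on with
  | refl => exact ⟨b, rfl, Relation.ReflTransGen.refl⟩
  | head h _ ih =>
    obtain ⟨a', rfl, q⟩ := ih
    obtain ⟨a, rfl⟩ := hdc a' _ h
    exact ⟨a, rfl, Relation.ReflTransGen.head ((hg a a').mpr h) q⟩

theorem below_piso {rA : A → A → Prop} {rB : B → B → Prop} {g : A → B}
    (hg : ∀ u v, rA u v ↔ rB (g u) (g v))
    (hdc : ∀ (u : A) (y : B), rB y (g u) → ∃ v, g v = y)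
    (hinj : Function.Injective g) (x : A) :
    PIso (belowRel rA x) (belowRel rB (g x)) (belowRoot rA x) (belowRoot rB (g x)) := by
  have hbij : Function.Bijective (fun a : Below rA x =>
      (⟨g a.1, Relation.ReflTransGen.lift g (fun _ _ h => (hg _ _).1 h) _ _ a.2⟩ :
        Below rB (g x))) := by
    constructor
    · intro a b h
      exact Subtype.ext (hinj (congrArg Subtype.val h))
    · rintro ⟨y, p⟩
      obtain ⟨a, rfl, q⟩ := reflTransGen_descend hg hdc p
      exact ⟨⟨a, q⟩, rfl⟩
  refine ⟨Equiv.ofBijective _ hbij, fun a b => hg a.1 b.1, Subtype.ext rfl⟩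

theorem below_acc {r : A → A → Prop} {x : A} (z : Below r x) :
    Relation.ReflTransGen (belowRel r x) z (belowRoot r x) := by
  obtain ⟨a, p⟩ := z
  induction p using Relation.ReflTransGen.head_induction_on with
  | refl => exact Relation.ReflTransGen.refl
  | head h p' ih =>
    exact Relation.ReflTransGen.head
      (show belowRel r x ⟨_, Relation.ReflTransGen.head h p'⟩ ⟨_, p'⟩ from h) ih

end AuxLemmas

namespace UnionAux

variable (X : WEApg.{u})

/-- Grandchildren of the root. -/
def Gp (z : X.carrier) : Prop := ∃ y, X.rel z y ∧ X.rel y X.root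

/-- Nodes reaching some grandchild. -/
def T : Type u := {z : X.carrier // ∃ w, Relation.ReflTransGen X.rel z w ∧ Gp X w}

def rT : T X → T X → Prop := fun a b => X.rel a.1 b.1

def rO : Option (T X) → Option (T X) → Prop
  | some a, some b => X.rel a.1 b.1
  | some a, none => Gp X a.1
  | none, _ => False

theorem T_dc {z c : X.carrier} (h : X.rel z c)
    (hc : ∃ w, Relation.ReflTransGen X.rel c w ∧ Gp X w) :
    ∃ w, Relation.ReflTransGen X.rel z w ∧ Gp X w := by
  obtain ⟨w, hw, gw⟩ := hc
  exact ⟨w, Relation.ReflTransGen.head h hw, gw⟩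

theorem acc_some (hwf : WellFounded X.rel) (x : X.carrier) :
    ∀ t : T X, t.1 = x → Acc (rO X) (some t) := by
  induction x using hwf.induction with
  | _ x ih =>
    rintro ⟨x, hx⟩ rfl
    constructor
    rintro (_ | b) hb
    · exact hb.elim
    · exact ih b.1 hb b rfl

theorem rO_wf (hwf : WellFounded X.rel) : WellFounded (rO X) := by
  constructor
  rintro (_ | t)
  · constructor
    rintro (_ | b) hb
    · exact hb.elim
    · exact acc_some X hwf b.1 b rfl
  · exact acc_some X hwf t.1 t rfl

theorem rO_ext (hA : ¬∃ a : X.carrier, ∀ z, X.rel z a ↔ Gp X z) : IsExtRel (rO X) := by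
  have key : ∀ v : T X, (∀ z : Option (T X), rO X z (some v) ↔ rO X z none) → False := by
    intro v h
    apply hA
    refine ⟨v.1, fun z => ?_⟩
    constructor
    · intro hz
      exact (h (some ⟨z, T_dc X hz v.2⟩)).1 hz
    · intro hz
      exact (h (some ⟨z, z, Relation.ReflTransGen.refl, hz⟩)).2 hz
  rintro (_ | u) (_ | v) h
  · rfl
  · exact absurd (key v fun z => (h z).symm) id
  · exact absurd (key u h) id
  · refine congrArg some (Subtype.ext (X.ext u.1 v.1 fun z => ?_))
    constructor
    · intro hz
      exact (h (some ⟨z, T_dc X hz u.2⟩)).1 hz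
    · intro hz
      exact (h (some ⟨z, T_dc X hz v.2⟩)).2 hz

theorem path_some (b : T X) (a : X.carrier) (p : Relation.ReflTransGen X.rel a b.1) :
    ∃ ta : T X, ta.1 = a ∧ Relation.ReflTransGen (rO X) (some ta) (some b) := by
  induction p using Relation.ReflTransGen.head_induction_on with
  | refl => exact ⟨b, rfl, Relation.ReflTransGen.refl⟩
  | head h _ ih =>
    obtain ⟨tc, rfl, q⟩ := ih
    exact ⟨⟨_, T_dc X h tc.2⟩, rfl, Relation.ReflTransGen.head
      (show rO X (some ⟨_, T_dc X h tc.2⟩) (some tc) from h) q⟩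

theorem rO_acc : ∀ o : Option (T X), Relation.ReflTransGen (rO X) o none := by
  rintro (_ | t)
  · exact Relation.ReflTransGen.refl
  · obtain ⟨w, hw, gw⟩ := t.2
    obtain ⟨ta, ha, q⟩ := path_some X ⟨w, w, Relation.ReflTransGen.refl, gw⟩ t.1 hw
    have : ta = t := Subtype.ext ha
    subst this
    exact q.tail gw

theorem below_some_piso (t : T X) :
    PIso (belowRel (rO X) (some t)) (belowRel X.rel t.1)
      (belowRoot (rO X) (some t)) (belowRoot X.rel t.1) := by
  have iso1 : PIso (belowRel (rT X) t) (belowRel (rO X) (some t))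
      (belowRoot (rT X) t) (belowRoot (rO X) (some t)) := by
    refine below_piso (rA := rT X) (rB := rO X) (g := some) (fun u v => Iff.rfl) ?_ (Option.some_injective _) t
    rintro u (_ | v) h
    · exact h.elim
    · exact ⟨v, rfl⟩
  have iso2 : PIso (belowRel (rT X) t) (belowRel X.rel t.1)
      (belowRoot (rT X) t) (belowRoot X.rel t.1) := by
    refine below_piso (g := Subtype.val) (fun u v => Iff.rfl) ?_ Subtype.val_injective t
    intro u y h
    exact ⟨⟨y, T_dc X h u.2⟩, rfl⟩
  exact piso_trans (piso_symm iso1) iso2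

end UnionAux

/-- Subgraphs `X/c` computed inside `X/y` agree with those computed in `X`. -/
theorem below_below_piso {A : Type*} {r : A → A → Prop} {y : A} (c : Below r y) :
    PIso (belowRel (belowRel r y) c) (belowRel r c.1)
      (belowRoot (belowRel r y) c) (belowRoot r c.1) := by
  refine below_piso (g := Subtype.val) (fun u v => Iff.rfl) ?_ Subtype.val_injective c
  intro u z h
  exact ⟨⟨z, Relation.ReflTransGen.head h u.2⟩, rfl⟩

theorem weapg_union_aux (X : WEApg.{u}) :
    ∃ U : WEApg.{u}, ∀ W : WEApg.{u},
      W.Mem U ↔ ∃ z, UnionAux.Gp X z ∧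
        PIso W.rel (belowRel X.rel z) W.root (belowRoot X.rel z) := by
  have hwf : WellFounded X.rel := wellFounded_of_isWFRel X.wf
  by_cases hA : ∃ a : X.carrier, ∀ z, X.rel z a ↔ UnionAux.Gp X z
  · obtain ⟨a, ha⟩ := hA
    refine ⟨⟨Below X.rel a, belowRel X.rel a, belowRoot X.rel a, below_acc,
      isWFRel_of_wellFounded (InvImage.wf Subtype.val hwf), ?_⟩, fun W => ?_⟩
    · rintro ⟨u, pu⟩ ⟨v, pv⟩ h
      refine Subtype.ext (X.ext u v fun z => ?_)
      constructor
      · intro hz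
        exact (h ⟨z, Relation.ReflTransGen.head hz pu⟩).1 hz
      · intro hz
        exact (h ⟨z, Relation.ReflTransGen.head hz pv⟩).2 hz
    · constructor
      · rintro ⟨c, hc, hiso⟩
        exact ⟨c.1, (ha c.1).1 hc, piso_trans hiso (below_below_piso c)⟩
      · rintro ⟨z, hG, hiso⟩
        refine ⟨⟨z, Relation.ReflTransGen.single ((ha z).2 hG)⟩, (ha z).2 hG, ?_⟩
        exact piso_trans hiso (piso_symm (below_below_piso _))
  · refine ⟨⟨Option (UnionAux.T X), UnionAux.rO X, none, UnionAux.rO_acc X,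
      isWFRel_of_wellFounded (UnionAux.rO_wf X hwf), UnionAux.rO_ext X hA⟩, fun W => ?_⟩
    constructor
    · rintro ⟨(_ | t), hc, hiso⟩
      · exact hc.elim
      · exact ⟨t.1, hc, piso_trans hiso (UnionAux.below_some_piso X t)⟩
    · rintro ⟨z, hG, hiso⟩
      refine ⟨some ⟨z, z, Relation.ReflTransGen.refl, hG⟩, hG, ?_⟩
      exact piso_trans hiso (piso_symm (UnionAux.below_some_piso X _))

/-- Union for well-founded extensional apgs: there is an apg `U` whose members are
exactly the members of the members `X/y` of `X`. -/
theorem weapg_union (X : WEApg.{u}) :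
    ∃ U : WEApg.{u}, ∀ W : WEApg.{u},
      W.Mem U ↔ ∃ y : X.carrier, X.rel y X.root ∧
        MemPGAt W.rel W.root (belowRel X.rel y) (belowRoot X.rel y) := by
  obtain ⟨U, hU⟩ := weapg_union_aux X
  refine ⟨U, fun W => (hU W).trans ?_⟩
  constructor
  · rintro ⟨z, ⟨y, hzy, hy⟩, hiso⟩
    refine ⟨y, hy, ⟨z, Relation.ReflTransGen.single hzy⟩, hzy, ?_⟩
    exact piso_trans hiso (piso_symm (below_below_piso _))
  · rintro ⟨y, hy, c, hc, hiso⟩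
    exact ⟨c.1, ⟨y, hc, hy⟩, piso_trans hiso (below_below_piso c)⟩
end

section
/- Transitive closures exist for well-founded extensional apgs: for any well-founded extensional apg X (on a type in a fixed universe) there exists a well-founded extensional apg T (on a type in the same universe) such that (i) T is transitive: for all well-founded extensional apgs W, Z, if Z ⋿ W and W ⋿ T then Z ⋿ T; (ii) every member of X is a member of T: for all W, W ⋿ X implies W ⋿ T; and (iii) T is smallest with these properties: for any well-founded extensional apg T' satisfying (i) and (ii), every W with W ⋿ T satisfies W ⋿ T'. -/
universe u v

universe w

section AuxPIso

theorem PIso.refl' {X : Type u} (r : X → X → Prop) (x : X) : PIso r r x x :=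
  ⟨Equiv.refl X, fun _ _ => Iff.rfl, rfl⟩

theorem PIso.symm' {X : Type u} {Y : Type v} {rX : X → X → Prop} {rY : Y → Y → Prop}
    {x : X} {y : Y} (h : PIso rX rY x y) : PIso rY rX y x := by
  obtain ⟨f, hf, hx⟩ := h
  refine ⟨f.symm, fun a b => ?_, by rw [← hx, Equiv.symm_apply_apply]⟩
  rw [hf (f.symm a) (f.symm b), Equiv.apply_symm_apply, Equiv.apply_symm_apply]

theorem PIso.trans' {X : Type u} {Y : Type v} {Z : Type w} {rX : X → X → Prop}
    {rY : Y → Y → Prop} {rZ : Z → Z → Prop} {x : X} {y : Y} {z : Z}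
    (h1 : PIso rX rY x y) (h2 : PIso rY rZ y z) : PIso rX rZ x z := by
  obtain ⟨f, hf, hx⟩ := h1
  obtain ⟨g, hg, hy⟩ := h2
  exact ⟨f.trans g, fun a b => (hf a b).trans (hg _ _), by simp [hx, hy]⟩

end AuxPIso

section AuxWF

theorem isWFRel_iff_wellFounded {X : Type u} {r : X → X → Prop} :
    IsWFRel r ↔ WellFounded r := by
  constructor
  · intro h
    have h2 := h {x | Acc r x} (fun x hx => Acc.intro x hx)
    constructor
    intro a
    have : a ∈ ({x | Acc r x} : Set X) := h2 ▸ Set.mem_univ a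
    exact this
  · intro h S hS
    apply Set.eq_univ_of_forall
    intro x
    exact h.induction x (fun a ih => hS a ih)

theorem IsWFRel.noCycle {X : Type u} {r : X → X → Prop} (h : IsWFRel r) {x : X}
    (hx : Relation.TransGen r x x) : False := by
  have wf := (isWFRel_iff_wellFounded.mp h).transGen
  exact wf.induction (C := fun x => ¬ Relation.TransGen r x x) x
    (fun a ih ha => ih a ha ha) hx

end AuxWF

section AuxBelow

variable {X : Type u} {Y : Type v} {r : X → X → Prop}

/-- Lift a path into the subgraph `X/z`. -/
theorem lift_rtg {z b : X} (hb : Relation.ReflTransGen r b z) :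
    ∀ {a : X}, Relation.ReflTransGen r a b → ∀ (ha : Relation.ReflTransGen r a z),
      Relation.ReflTransGen (belowRel r z) ⟨a, ha⟩ ⟨b, hb⟩ := by
  intro a h
  induction h using Relation.ReflTransGen.head_induction_on with
  | refl => intro ha; exact Relation.ReflTransGen.refl
  | head hcm hmb ih =>
    intro ha
    exact Relation.ReflTransGen.head
      (show belowRel r z ⟨_, ha⟩ ⟨_, hmb.trans hb⟩ from hcm) (ih (hmb.trans hb))

theorem rtg_of_below {z : X} {a b : Below r z}
    (h : Relation.ReflTransGen (belowRel r z) a b) :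
    Relation.ReflTransGen r a.1 b.1 :=
  h.lift Subtype.val (fun _ _ hr => hr)

/-- `(X/z)/b ≅ X/b.1` as pointed graphs. -/
theorem pIso_belowBelow (r : X → X → Prop) (z : X) (b : Below r z) :
    PIso (belowRel (belowRel r z) b) (belowRel r b.1)
      (belowRoot (belowRel r z) b) (belowRoot r b.1) := by
  refine ⟨⟨fun a => ⟨a.1.1, rtg_of_below a.2⟩,
          fun c => ⟨⟨c.1, c.2.trans b.2⟩, lift_rtg b.2 c.2 (c.2.trans b.2)⟩,
          ?_, ?_⟩, fun a b => Iff.rfl, rfl⟩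
  · intro a; apply Subtype.ext; apply Subtype.ext; rfl
  · intro c; apply Subtype.ext; rfl

/-- An isomorphism of graphs restricts to the subgraphs below corresponding points. -/
theorem pIso_below_of_equiv {rX : X → X → Prop} {rY : Y → Y → Prop}
    (f : X ≃ Y) (hf : ∀ a b, rX a b ↔ rY (f a) (f b)) (w : X) :
    PIso (belowRel rX w) (belowRel rY (f w)) (belowRoot rX w) (belowRoot rY (f w)) := by
  have back : ∀ a b, rY a b → rX (f.symm a) (f.symm b) := by
    intro a b h
    rw [hf (f.symm a) (f.symm b), Equiv.apply_symm_apply, Equiv.apply_symm_apply]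
    exact h
  refine ⟨⟨fun a => ⟨f a.1, a.2.lift f (fun a b h => (hf a b).mp h)⟩,
          fun c => ⟨f.symm c.1, by
            have this : Relation.ReflTransGen rX (f.symm c.1) (f.symm (f w)) := c.2.lift f.symm back
            rwa [Equiv.symm_apply_apply] at this⟩, ?_, ?_⟩,
          fun a b => hf a.1 b.1, rfl⟩
  · intro a; apply Subtype.ext; simp
  · intro c; apply Subtype.ext; simp

end AuxBelow

/-- The subgraph apg `X/z`. -/
def WEApg.below (X : WEApg.{u}) (z : X.carrier) : WEApg.{u} where
  carrier := Below X.rel z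
  rel := belowRel X.rel z
  root := belowRoot X.rel z
  acc := fun a => lift_rtg Relation.ReflTransGen.refl a.2 a.2
  wf := by
    rw [isWFRel_iff_wellFounded]
    exact InvImage.wf Subtype.val (isWFRel_iff_wellFounded.mp X.wf)
  ext := by
    intro a b h
    apply Subtype.ext
    apply X.ext
    intro c
    constructor
    · intro hc
      exact (h ⟨c, Relation.ReflTransGen.head hc a.2⟩).mp hc
    · intro hc
      exact (h ⟨c, Relation.ReflTransGen.head hc b.2⟩).mpr hc

section TC

variable (X : WEApg.{u})

/-- The relation of the transitive closure: old edges, plus every non-root node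
becomes a child of the root. -/
def tcRel : X.carrier → X.carrier → Prop :=
  fun a b => X.rel a b ∨ (b = X.root ∧ a ≠ X.root)

theorem not_rel_root (z : X.carrier) : ¬ X.rel X.root z := by
  intro h
  exact X.wf.noCycle (Relation.TransGen.head' h (X.acc z))

theorem child_ne_root {a b : X.carrier} (h : X.rel a b) : a ≠ X.root := by
  rintro rfl; exact not_rel_root X b h

theorem tc_path {a b : X.carrier} (h : Relation.ReflTransGen (tcRel X) a b) :
    b ≠ X.root → Relation.ReflTransGen X.rel a b := by
  induction h with
  | refl => intro _; exact Relation.ReflTransGen.refl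
  | tail h1 h2 ih =>
    intro hb
    rcases h2 with h2 | ⟨h2, _⟩
    · exact (ih (child_ne_root X h2)).tail h2
    · exact absurd h2 hb

theorem tcRel_wf : IsWFRel (tcRel X) := by
  rw [isWFRel_iff_wellFounded]
  have hX := isWFRel_iff_wellFounded.mp X.wf
  have hacc : ∀ x : X.carrier, x ≠ X.root → Acc (tcRel X) x := by
    intro x
    induction x using hX.induction with
    | _ x ih =>
      intro hx
      refine Acc.intro x ?_
      intro y hy
      rcases hy with hy | ⟨h2, _⟩
      · exact ih y hy (child_ne_root X hy)
      · exact absurd h2 hx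
  constructor
  intro x
  by_cases hx : x = X.root
  · subst hx
    refine Acc.intro _ ?_
    intro y hy
    rcases hy with hy | ⟨_, hy⟩
    · exact hacc y (child_ne_root X hy)
    · exact hacc y hy
  · exact hacc x hx

theorem tcRel_ext : IsExtRel (tcRel X) := by
  intro a b h
  by_cases ha : a = X.root
  · by_cases hb : b = X.root
    · rw [ha, hb]
    · exfalso
      have hbb : tcRel X b b := (h b).mp (Or.inr ⟨ha, hb⟩)
      rcases hbb with h2 | ⟨h2, _⟩
      · exact X.wf.noCycle (Relation.TransGen.single h2)
      · exact hb h2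
  · by_cases hb : b = X.root
    · exfalso
      have haa : tcRel X a a := (h a).mpr (Or.inr ⟨hb, ha⟩)
      rcases haa with h2 | ⟨h2, _⟩
      · exact X.wf.noCycle (Relation.TransGen.single h2)
      · exact ha h2
    · apply X.ext
      intro z
      constructor
      · intro hz
        rcases (h z).mp (Or.inl hz) with h2 | ⟨h2, _⟩
        · exact h2
        · exact absurd h2 hb
      · intro hz
        rcases (h z).mpr (Or.inl hz) with h2 | ⟨h2, _⟩
        · exact h2
        · exact absurd h2 ha

/-- The transitive closure apg. -/
def tcApg : WEApg.{u} where
  carrier := X.carrier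
  rel := tcRel X
  root := X.root
  acc := fun x => by
    by_cases hx : x = X.root
    · rw [hx]
    · exact Relation.ReflTransGen.single (Or.inr ⟨rfl, hx⟩)
  wf := tcRel_wf X
  ext := tcRel_ext X

/-- For a non-root node `z`, the subgraph below `z` is the same in `X` and in `tcApg X`. -/
theorem pIso_tcBelow {z : X.carrier} (hz : z ≠ X.root) :
    PIso (belowRel (tcRel X) z) (belowRel X.rel z)
      (belowRoot (tcRel X) z) (belowRoot X.rel z) := by
  have hmem : ∀ a : X.carrier, Relation.ReflTransGen (tcRel X) a z ↔
      Relation.ReflTransGen X.rel a z := by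
    intro a
    constructor
    · intro h; exact tc_path X h hz
    · intro h; exact Relation.ReflTransGen.mono (fun _ _ hh => Or.inl hh) _ _ h
  refine ⟨Equiv.subtypeEquivRight hmem, ?_, ?_⟩
  · intro a b
    have hb1 : b.1 ≠ X.root := by
      intro hb
      rcases b.2.cases_head with h | ⟨c, hc, _⟩
      · exact hz (h.symm.trans hb)
      · rcases hc with hc | ⟨_, hne⟩
        · exact not_rel_root X c (hb ▸ hc)
        · exact hne hb
    show tcRel X a.1 b.1 ↔ X.rel a.1 b.1
    constructor
    · intro h
      rcases h with h | ⟨h, _⟩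
      · exact h
      · exact absurd h hb1
    · exact Or.inl
  · rfl

end TC

/-- Transitive closures exist for well-founded extensional apgs. -/
theorem weapg_transitive_closure (X : WEApg.{u}) :
    ∃ T : WEApg.{u},
      (∀ W Z : WEApg.{u}, Z.Mem W → W.Mem T → Z.Mem T) ∧
      (∀ W : WEApg.{u}, W.Mem X → W.Mem T) ∧
      (∀ T' : WEApg.{u},
        ((∀ W Z : WEApg.{u}, Z.Mem W → W.Mem T' → Z.Mem T') ∧
         (∀ W : WEApg.{u}, W.Mem X → W.Mem T')) →
        ∀ W : WEApg.{u}, W.Mem T → W.Mem T') := by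
  classical
  refine ⟨tcApg X, ?_, ?_, ?_⟩
  · -- (i) transitivity
    rintro W Z ⟨w, hw, isoZ⟩ ⟨z, hz, isoW⟩
    replace hz : tcRel X z X.root := hz
    replace isoW : PIso W.rel (belowRel (tcRel X) z) W.root (belowRoot (tcRel X) z) := isoW
    obtain ⟨f, hf, hfr⟩ := isoW
    have hzne : z ≠ X.root := by
      rcases hz with hz | ⟨_, hz⟩
      · exact child_ne_root X hz
      · exact hz
    have hb : belowRel (tcRel X) z (f w) (belowRoot (tcRel X) z) := by
      rw [← hfr]; exact (hf w W.root).mp hw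
    have hbX : X.rel (f w).1 z := by
      rcases hb with h | ⟨h, _⟩
      · exact h
      · exact absurd h hzne
    have hbne : (f w).1 ≠ X.root := child_ne_root X hbX
    refine ⟨(f w).1, show tcRel X (f w).1 X.root from Or.inr ⟨rfl, hbne⟩, ?_⟩
    have i1 : PIso (belowRel W.rel w) (belowRel (belowRel (tcRel X) z) (f w))
        (belowRoot W.rel w) (belowRoot (belowRel (tcRel X) z) (f w)) :=
      pIso_below_of_equiv f hf w
    exact isoZ.trans' (i1.trans' (pIso_belowBelow (tcRel X) z (f w)))
  · -- (ii) members of X are members of T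
    rintro W ⟨z, hz, iso⟩
    replace iso : PIso W.rel (belowRel X.rel z) W.root (belowRoot X.rel z) := iso
    exact ⟨z, show tcRel X z X.root from Or.inl hz,
      iso.trans' (pIso_tcBelow X (child_ne_root X hz)).symm'⟩
  · -- (iii) minimality
    rintro T' ⟨hT1, hT2⟩ W ⟨z, hz, iso⟩
    replace hz : tcRel X z X.root := hz
    replace iso : PIso W.rel (belowRel (tcRel X) z) W.root (belowRoot (tcRel X) z) := iso
    have hzne : z ≠ X.root := by
      rcases hz with hz | ⟨_, hz⟩
      · exact child_ne_root X hz
      · exact hz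
    have iso2 : PIso W.rel (belowRel X.rel z) W.root (belowRoot X.rel z) :=
      iso.trans' (pIso_tcBelow X hzne)
    have htg : Relation.TransGen X.rel z X.root := by
      rcases (X.acc z).cases_head with h | ⟨c, hc, hcr⟩
      · exact absurd h hzne
      · exact Relation.TransGen.head' hc hcr
    clear iso hz hzne
    revert iso2
    revert W
    induction htg using Relation.TransGen.head_induction_on with
    | @single a h =>
      intro W iso2
      exact hT2 W ⟨a, h, iso2⟩
    | @head a c h' hh ih =>
      intro W iso2
      have memYc : MemPGAt W.rel W.root (belowRel X.rel c) (belowRoot X.rel c) := by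
        refine ⟨⟨a, Relation.ReflTransGen.single h'⟩, ?_, ?_⟩
        · exact h'
        · exact iso2.trans'
            (pIso_belowBelow X.rel c ⟨a, Relation.ReflTransGen.single h'⟩).symm'
      exact hT1 (X.below c) W memYc (ih (X.below c) (PIso.refl' _ _))
end
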